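/- Let f(n, k) denote the number of words in [k]^n avoiding the pattern 123, and define a_j = 1 if j ≡ 0 (mod 3), a_j = -1 if j ≡ 1 (mod 3), and a_j = 0 if j ≡ 2 (mod 3). Then for every integer k ≥ 0, the identity (∑_{n ≥ 0} f(n, k)·x^n) · (∑_{j=0}^{k} a_j·C(k, j)·x^j) = 1 holds as an identity of formal power series over ℚ. -/

import Mathlib

open PowerSeries

/-- The `i`-th letter (1-based value in `{1,…,k}`) of a word `w ∈ [k]^n`,
with value `0` outside the word. -/
def letter {n k : ℕ} (w : Fin n → Fin k) (i : ℕ) : ℕ :=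
  if h : i < n then (w ⟨i, h⟩ : ℕ) + 1 else 0

/-- `w` avoids the pattern 123: there is no 0-based index `i` with `i + 2 < n`
such that `w i < w (i+1) < w (i+2)`. -/
def Avoids123 {n k : ℕ} (w : Fin n → Fin k) : Prop :=
  ∀ i : ℕ, i + 2 < n →
    ¬ (letter w i < letter w (i + 1) ∧ letter w (i + 1) < letter w (i + 2))

/-- The number of words in `[k]^n` avoiding 123. -/
noncomputable def f (n k : ℕ) : ℕ := Nat.card {w : Fin n → Fin k // Avoids123 w}

/-- `a j = 1` if `j ≡ 0 (mod 3)`, `-1` if `j ≡ 1 (mod 3)`, `0` if `j ≡ 2 (mod 3)`. -/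
def a (j : ℕ) : ℚ := if j % 3 = 0 then 1 else if j % 3 = 1 then -1 else 0

namespace Stmt17Aux

def Pre (j : ℕ) {n k : ℕ} (v : Fin n → Fin k) : Prop :=
  ∀ i, i + 1 < j → letter v i < letter v (i + 1)

def Suf (j : ℕ) {n k : ℕ} (v : Fin n → Fin k) : Prop :=
  ∀ i, j ≤ i → i + 2 < n →
    ¬ (letter v i < letter v (i + 1) ∧ letter v (i + 1) < letter v (i + 2))

def glue {j n k : ℕ} (hj : j ≤ n) (u : Fin j → Fin k) (w : Fin (n - j) → Fin k) :
    Fin n → Fin k :=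
  fun i => if h : (i : ℕ) < j then u ⟨i, h⟩
    else w ⟨(i : ℕ) - j, by have := i.isLt; omega⟩

lemma letter_glue {j n k : ℕ} (hj : j ≤ n) (u : Fin j → Fin k) (w : Fin (n - j) → Fin k)
    (i : ℕ) : letter (glue hj u w) i = if i < j then letter u i else letter w (i - j) := by
  by_cases h1 : i < j
  · have h2 : i < n := lt_of_lt_of_le h1 hj
    simp [letter, glue, h1, h2]
  · by_cases h2 : i < n
    · have h3 : i - j < n - j := by omega
      simp [letter, glue, h1, h2, h3]
    · have h3 : ¬ (i - j < n - j) := by omega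
      simp [letter, glue, h1, h2, h3]

lemma letter_suffix {j n k : ℕ} (hj : j ≤ n) (v : Fin n → Fin k) (i : ℕ) :
    letter (fun t : Fin (n - j) => v ⟨j + (t : ℕ), by have := t.isLt; omega⟩) i
      = letter v (j + i) := by
  by_cases h : i < n - j
  · have h2 : j + i < n := by omega
    simp [letter, h, h2]
  · have h2 : ¬ (j + i < n) := by omega
    simp [letter, h, h2]

lemma letter_prefix {j n k : ℕ} (hj : j ≤ n) (v : Fin n → Fin k) (i : ℕ) (hi : i < j) :
    letter (fun t : Fin j => v (Fin.castLE hj t)) i = letter v i := by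
  have h2 : i < n := lt_of_lt_of_le hi hj
  simp [letter, hi, h2]

def condEquiv {n k j : ℕ} (hj : j ≤ n) :
    {v : Fin n → Fin k // Pre j v ∧ Suf j v} ≃
      ({u : Fin j → Fin k // Pre j u} × {w : Fin (n - j) → Fin k // Avoids123 w}) where
  toFun v :=
    ⟨⟨fun t => v.1 (Fin.castLE hj t), by
        intro i hi
        rw [letter_prefix hj v.1 i (by omega), letter_prefix hj v.1 (i+1) hi]
        exact v.2.1 i hi⟩,
     ⟨fun t => v.1 ⟨j + (t : ℕ), by have := t.isLt; omega⟩, by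
        intro i hi
        have h2 : j + i + 2 < n := by omega
        have h0 := v.2.2 (j + i) (Nat.le_add_right _ _) h2
        simp only [letter_suffix hj v.1]
        rw [show j + (i + 1) = j + i + 1 by omega, show j + (i + 2) = j + i + 2 by omega]
        exact h0⟩⟩
  invFun p :=
    ⟨glue hj p.1.1 p.2.1, by
        constructor
        · intro i hi
          rw [letter_glue hj _ _ i, letter_glue hj _ _ (i+1), if_pos (by omega : i < j),
            if_pos hi]
          exact p.1.2 i hi
        · intro i hij hi2
          rw [letter_glue hj _ _ i, letter_glue hj _ _ (i+1), letter_glue hj _ _ (i+2),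
            if_neg (by omega : ¬ i < j), if_neg (by omega : ¬ i + 1 < j),
            if_neg (by omega : ¬ i + 2 < j),
            show i + 1 - j = (i - j) + 1 by omega, show i + 2 - j = (i - j) + 2 by omega]
          exact p.2.2 (i - j) (by omega)⟩
  left_inv v := by
    apply Subtype.ext
    funext i
    simp only [glue]
    split_ifs with h
    · congr 1
    · exact congrArg v.1 (Fin.ext (show j + ((i : ℕ) - j) = (i : ℕ) by omega))
  right_inv p := by
    apply Prod.ext
    · apply Subtype.ext
      funext t
      simp only [glue]
      rw [dif_pos (show ((Fin.castLE hj t : Fin n) : ℕ) < j from t.isLt)]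
      congr 1
    · apply Subtype.ext
      funext t
      simp only [glue]
      rw [dif_neg (by simp : ¬ ((⟨j + (t:ℕ), by have := t.isLt; omega⟩ : Fin n) : ℕ) < j)]
      congr 1
      apply Fin.ext
      simp

lemma pre_iff_strictMono {j k : ℕ} (u : Fin j → Fin k) : Pre j u ↔ StrictMono u := by
  constructor
  · intro hp
    have adj : ∀ i (h : i + 1 < j), u ⟨i, by omega⟩ < u ⟨i + 1, h⟩ := by
      intro i h
      have := hp i h
      rw [letter, letter, dif_pos (show i < j by omega), dif_pos h] at this
      exact by omega
    have step : ∀ d (x : ℕ) (h : x + d + 1 < j), u ⟨x, by omega⟩ < u ⟨x + d + 1, h⟩ := by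
      intro d
      induction d with
      | zero => intro x h; exact adj x h
      | succ d ih =>
        intro x h
        exact lt_trans (ih x (by omega)) (adj (x + d + 1) h)
    intro x y hxy
    obtain ⟨d, hd⟩ : ∃ d, (y : ℕ) = (x : ℕ) + d + 1 := ⟨(y : ℕ) - (x : ℕ) - 1, by omega⟩
    have h2 : (x : ℕ) + d + 1 < j := by rw [← hd]; exact y.isLt
    have := step d x h2
    have hx : (⟨(x : ℕ), by omega⟩ : Fin j) = x := rfl
    have hy : (⟨(x : ℕ) + d + 1, h2⟩ : Fin j) = y := Fin.ext hd.symm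
    rwa [hx, hy] at this
  · intro hs i hi
    rw [letter, letter, dif_pos (show i < j by omega), dif_pos hi]
    have : u ⟨i, by omega⟩ < u ⟨i + 1, hi⟩ := hs (show (⟨i, by omega⟩ : Fin j) < ⟨i+1, hi⟩ by
      simp [Fin.lt_def])
    omega

def strictMonoEquiv (j k : ℕ) :
    {u : Fin j → Fin k // StrictMono u} ≃ {s : Finset (Fin k) // s.card = j} where
  toFun u := ⟨Finset.univ.image u.1, by
    rw [Finset.card_image_of_injective _ u.2.injective, Finset.card_univ, Fintype.card_fin]⟩
  invFun s := ⟨s.1.orderEmbOfFin s.2, (s.1.orderEmbOfFin s.2).strictMono⟩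
  left_inv u := by
    apply Subtype.ext
    exact (Finset.orderEmbOfFin_unique _ (fun x => Finset.mem_image_of_mem _ (Finset.mem_univ x))
      u.2).symm
  right_inv s := by
    apply Subtype.ext
    apply Finset.coe_injective
    rw [Finset.coe_image, Finset.coe_univ, Set.image_univ, Finset.range_orderEmbOfFin]

lemma card_pre (j k : ℕ) : Nat.card {u : Fin j → Fin k // Pre j u} = k.choose j := by
  rw [Nat.card_congr (Equiv.subtypeEquivRight fun u => pre_iff_strictMono u),
    Nat.card_congr (strictMonoEquiv j k), Nat.card_eq_fintype_card, Fintype.card_finset_len,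
    Fintype.card_fin]

lemma card_cond {n k j : ℕ} (hj : j ≤ n) :
    Nat.card {v : Fin n → Fin k // Pre j v ∧ Suf j v} = k.choose j * f (n - j) k := by
  rw [Nat.card_congr (condEquiv hj), Nat.card_prod, card_pre]
  rfl

lemma a_triple (q : ℕ) : a q + a (q + 1) + a (q + 2) = 0 := by
  have h : q % 3 = 0 ∨ q % 3 = 1 ∨ q % 3 = 2 := by omega
  rcases h with h | h | h <;>
    · have e1 : (q + 1) % 3 = (q % 3 + 1) % 3 := by omega
      have e2 : (q + 2) % 3 = (q % 3 + 2) % 3 := by omega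
      rw [a, a, a, e1, e2, h]
      norm_num

lemma sum_Icc_triple (q : ℕ) : ∑ j ∈ Finset.Icc q (q + 2), a j = a q + a (q + 1) + a (q + 2) := by
  rw [show q + 2 = (q + 1) + 1 by rfl, Finset.sum_Icc_succ_top (by omega),
    Finset.sum_Icc_succ_top (by omega), Finset.Icc_self, Finset.sum_singleton]

end Stmt17Aux

namespace Stmt17Aux

lemma key {n k : ℕ} (hn : 1 ≤ n) (v : Fin n → Fin k)
    [inst : ∀ j : ℕ, Decidable (Pre j v ∧ Suf j v)] :
    ∑ j ∈ Finset.range (n + 1), (a j * if Pre j v ∧ Suf j v then (1 : ℚ) else 0) = 0 := by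
  classical
  set m := Nat.findGreatest (fun j => Pre j v) n with hmdef
  set q := sInf {j | Suf j v} with hqdef
  have hQn : Suf n v := fun i hi h2 => absurd h2 (by omega)
  have hqn : q ≤ n := Nat.sInf_le (show n ∈ {j | Suf j v} from hQn)
  have hQq : Suf q v := show q ∈ {j | Suf j v} from Nat.sInf_mem ⟨n, hQn⟩
  have hmn : m ≤ n := Nat.findGreatest_le n
  have hP1 : Pre 1 v := fun i hi => absurd hi (by omega)
  have hm1 : 1 ≤ m := Nat.le_findGreatest hn hP1
  have hPm : Pre m v := Nat.findGreatest_spec (P := fun j => Pre j v) hn hP1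
  have hset : (Finset.range (n + 1)).filter (fun j => Pre j v ∧ Suf j v) = Finset.Icc q m := by
    ext j
    simp only [Finset.mem_filter, Finset.mem_range, Finset.mem_Icc]
    constructor
    · rintro ⟨h1, ⟨hp, hs⟩⟩
      exact ⟨Nat.sInf_le (show j ∈ {j | Suf j v} from hs), Nat.le_findGreatest (by omega) hp⟩
    · rintro ⟨h1, h2⟩
      exact ⟨by omega, ⟨fun i hi => hPm i (by omega), fun i hi h2' => hQq i (by omega) h2'⟩⟩
  have hsum : ∑ j ∈ Finset.range (n + 1), (a j * if Pre j v ∧ Suf j v then (1 : ℚ) else 0)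
      = ∑ j ∈ Finset.Icc q m, a j := by
    rw [← hset, Finset.sum_filter]
    exact Finset.sum_congr rfl fun j _ => by split_ifs <;> simp
  rw [hsum]
  rcases le_or_gt q m with hqm | hqm
  · rcases Nat.eq_zero_or_pos q with h0 | h0
    · have hAv : Suf 0 v := h0 ▸ hQq
      have hm2 : m ≤ 2 := by
        by_contra hc
        push_neg at hc
        exact hAv 0 (by omega) (by omega) ⟨hPm 0 (by omega), hPm 1 (by omega)⟩
      rw [h0]
      interval_cases m
      · rw [show (1 : ℕ) = 0 + 1 by rfl, Finset.sum_Icc_succ_top (by omega),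
          Finset.Icc_self, Finset.sum_singleton]
        norm_num [a]
      · rw [show (2 : ℕ) = 0 + 2 by rfl, sum_Icc_triple, a_triple]
    · have hnotQ : ¬ Suf (q - 1) v := fun hcon =>
        absurd (Nat.sInf_le (show q - 1 ∈ {j | Suf j v} from hcon)) (by omega)
      rw [Suf] at hnotQ
      push_neg at hnotQ
      obtain ⟨i, hi1, hi2, hocc⟩ := hnotQ
      have hieq : i = q - 1 := by
        by_contra hne
        exact hQq i (by omega) hi2 hocc
      subst hieq
      have e1 : q - 1 + 1 = q := by omega
      have e2 : q - 1 + 2 = q + 1 := by omega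
      rw [e1, e2] at hocc
      obtain ⟨o1, o2⟩ := hocc
      have hn1 : q + 1 < n := by omega
      have hPq2 : Pre (q + 2) v := by
        intro t ht
        rcases lt_trichotomy (t + 1) q with h | h | h
        · exact hPm t (by omega)
        · rw [show t = q - 1 by omega, e1]
          exact o1
        · rw [show t = q by omega]
          exact o2
      have hle : q + 2 ≤ m := Nat.le_findGreatest (by omega) hPq2
      have hge : m ≤ q + 2 := by
        by_contra hc
        push_neg at hc
        exact hQq q le_rfl (by omega) ⟨hPm q (by omega), hPm (q + 1) (by omega)⟩
      rw [show m = q + 2 by omega, sum_Icc_triple, a_triple]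
  · rw [Finset.Icc_eq_empty (by omega), Finset.sum_empty]

lemma f_zero (k : ℕ) : f 0 k = 1 := by
  haveI : Unique {w : Fin 0 → Fin k // Avoids123 w} :=
    ⟨⟨⟨Fin.elim0, fun i h => absurd h (by omega)⟩⟩,
      fun w => Subtype.ext (funext fun i => i.elim0)⟩
  exact Nat.card_unique
  
end Stmt17Aux

open Stmt17Aux in
theorem stmt17 (k : ℕ) :
    (PowerSeries.mk fun n => (f n k : ℚ)) *
        ∑ j ∈ Finset.range (k + 1), C (a j * (k.choose j : ℚ)) * X ^ j = 1 := by
  classical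
  have hA : (∑ j ∈ Finset.range (k + 1), C (a j * (k.choose j : ℚ)) * X ^ j)
      = PowerSeries.mk fun j => a j * (k.choose j : ℚ) := by
    ext m
    rw [map_sum, coeff_mk]
    simp only [coeff_C_mul, coeff_X_pow, mul_ite, mul_one, mul_zero]
    rw [Finset.sum_ite_eq (Finset.range (k + 1)) m (fun j => a j * (k.choose j : ℚ))]
    by_cases hm : m ≤ k
    · rw [if_pos (Finset.mem_range.2 (by omega))]
    · rw [if_neg (by simp; omega), Nat.choose_eq_zero_of_lt (by omega)]
      simp
  rw [hA, mul_comm]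
  ext n
  rw [PowerSeries.coeff_mul, Finset.Nat.sum_antidiagonal_eq_sum_range_succ_mk]
  simp only [coeff_mk, coeff_one]
  rcases Nat.eq_zero_or_pos n with hn | hn
  · subst hn
    simp [f_zero, a]
  · rw [if_neg (by omega)]
    have hterm : ∀ j ∈ Finset.range (n + 1),
        (a j * (k.choose j : ℚ)) * (f (n - j) k : ℚ)
          = ∑ v : Fin n → Fin k, (a j * if Pre j v ∧ Suf j v then (1 : ℚ) else 0) := by
      intro j hj
      rw [Finset.mem_range] at hj
      have hc := card_cond (n := n) (k := k) (j := j) (by omega)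
      have hcard : ((k.choose j * f (n - j) k : ℕ) : ℚ)
          = ∑ v : Fin n → Fin k, (if Pre j v ∧ Suf j v then (1 : ℚ) else 0) := by
        rw [← hc, Nat.card_eq_fintype_card, Fintype.card_subtype, Finset.card_filter]
        push_cast
        exact Finset.sum_congr rfl fun v _ => by split_ifs <;> simp
      push_cast at hcard
      rw [mul_assoc, hcard, Finset.mul_sum]
    rw [Finset.sum_congr rfl hterm, Finset.sum_comm]
    exact Finset.sum_eq_zero fun v _ => key hn v
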